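/- Let M be a monotone Möbius structure on S¹. For every nondegenerate 4-tuple q, M(q) ≠ (0,0,0); equivalently, there is no 4-tuple of distinct points (x,y,z,u) and semi-metric of M with infinitely remote point u satisfying |xy|_u = |xz|_u = |yz|_u. -/

import Mathlib

open scoped Classical

section Mobius

variable {X : Type*}

/-- The pairs `(x,y)` and `(z,u)` separate each other on the circularly ordered set `X`:
`z` and `u` lie on different open arcs determined by `x` and `y`. -/
def PairSeparates [CircularOrder X] (x y z u : X) : Prop :=
  (sbtw x z y ∧ sbtw y u x) ∨ (sbtw x u y ∧ sbtw y z x)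

/-- The pair `(d₁,d₂)` separates the pairs `(b₁,b₂)` and `(c₁,c₂)`: the latter two pairs lie
on different open arcs determined by `(d₁,d₂)`. -/
def ArcSepPairs [CircularOrder X] (d₁ d₂ b₁ b₂ c₁ c₂ : X) : Prop :=
  (sbtw d₁ b₁ d₂ ∧ sbtw d₁ b₂ d₂ ∧ sbtw d₂ c₁ d₁ ∧ sbtw d₂ c₂ d₁) ∨
  (sbtw d₁ c₁ d₂ ∧ sbtw d₁ c₂ d₂ ∧ sbtw d₂ b₁ d₁ ∧ sbtw d₂ b₂ d₁)

/-- Two pairs `(b₁,b₂)` and `(c₁,c₂)` of points are in the strong causal relation: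
either of them lies entirely in one open arc determined by the other. -/
def StrongCausal [CircularOrder X] (b₁ b₂ c₁ c₂ : X) : Prop :=
  (sbtw b₁ c₁ b₂ ∧ sbtw b₁ c₂ b₂) ∨ (sbtw b₂ c₁ b₁ ∧ sbtw b₂ c₂ b₁) ∨
  (sbtw c₁ b₁ c₂ ∧ sbtw c₁ b₂ c₂) ∨ (sbtw c₂ b₁ c₁ ∧ sbtw c₂ b₂ c₁)

/-- The topology generated by open balls of the semi-metrics with infinitely remote points,
centered at finite points. `D ω x y` denotes `|xy|` in the semi-metric with infinitely remote
point `ω`. -/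
def MTopology (D : X → X → X → ℝ) : TopologicalSpace X :=
  TopologicalSpace.generateFrom
    {s | ∃ ω x r, x ≠ ω ∧ s = {y | y ≠ ω ∧ D ω x y < r}}

/-- A (ptolemaic) monotone Möbius structure on a circle `X`, presented by the family of its
semi-metrics with infinitely remote points: `D ω x y` is the distance `|xy|_ω` in the
semi-metric with infinitely remote point `ω` (defined for `x, y ≠ ω`).  The semi-metrics
are pairwise related by metric inversion (up to homothety), every one of them satisfies the
Ptolemy inequality, the monotonicity axiom (M) holds, the M-topology is the given topology
of `X`, and `X` is homeomorphic to the circle. -/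
structure MonotoneMobius (X : Type*) [CircularOrder X] [t : TopologicalSpace X] where
  D : X → X → X → ℝ
  symm : ∀ ω x y, D ω x y = D ω y x
  refl : ∀ ω x, D ω x x = 0
  pos : ∀ ω x y, x ≠ y → x ≠ ω → y ≠ ω → 0 < D ω x y
  inversion : ∀ ω ω', ω ≠ ω' → ∃ c : ℝ, 0 < c ∧ ∀ x y, x ≠ ω → y ≠ ω → x ≠ ω' → y ≠ ω' →
    D ω' x y = c * D ω x y / (D ω x ω' * D ω y ω')
  ptolemy : ∀ ω x y z u, x ≠ ω → y ≠ ω → z ≠ ω → u ≠ ω →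
    D ω x y * D ω z u ≤ D ω x z * D ω y u + D ω x u * D ω y z
  mono : ∀ ω x y z u, x ≠ ω → y ≠ ω → z ≠ ω → u ≠ ω → PairSeparates x y z u →
    D ω x z * D ω y u < D ω x y * D ω z u ∧ D ω x u * D ω y z < D ω x y * D ω z u
  mtop : MTopology D = t
  circle : Nonempty (X ≃ₜ AddCircle (1 : ℝ))

variable [CircularOrder X] [TopologicalSpace X]

/-- The 4-tuple `(x,y,z,u)` is harmonic (of the first type): `|xz||yu| = |xu||yz|` in any
semi-metric of the Möbius structure. -/
def MonotoneMobius.Harmonic (M : MonotoneMobius X) (x y z u : X) : Prop :=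
  ∀ ω, ω ≠ x → ω ≠ y → ω ≠ z → ω ≠ u →
    M.D ω x z * M.D ω y u = M.D ω x u * M.D ω y z

/-- The distance `|q q'| = |ln ((|xp'||yp|)/(|xp||yp'|))|` between two harmonic pairs
`q = ((x,y),(p,·))` and `q' = ((x,y),(p',·))` with common axis `(x,y)`; computed here in the
semi-metric with infinitely remote point `x`, where it equals `|ln (|yp|_x / |yp'|_x)|`. -/
noncomputable def MonotoneMobius.lineDist (M : MonotoneMobius X) (x y p p' : X) : ℝ :=
  |Real.log (M.D x y p / M.D x y p')|

end Mobius


section SepLemmas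

variable {Y : Type*} [CircularOrder Y]

lemma tri_sbtw' {a b c : Y} (hab : a ≠ b) (hbc : b ≠ c) (hca : c ≠ a) :
    sbtw a b c ∨ sbtw a c b := by
  rcases btw_total a b c with h | h
  · left
    refine sbtw_of_btw_not_btw h fun h' => ?_
    rcases h.antisymm h' with rfl | rfl | rfl <;> simp_all
  · right
    have h' : sbtw c b a := by
      refine sbtw_of_btw_not_btw h fun h'' => ?_
      rcases h.antisymm h'' with rfl | rfl | rfl <;> simp_all
    exact sbtw_cyclic_left (sbtw_cyclic_left h')

lemma sepA' {x y z u : Y} (hxyz : sbtw x y z)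
    (hxu : x ≠ u) (hyu : y ≠ u) (hzu : z ≠ u) :
    PairSeparates x y z u ∨ PairSeparates x z y u ∨ PairSeparates x u y z := by
  have hxy : x ≠ y := fun h => by subst h; exact sbtw_irrefl_left hxyz
  have hyz : y ≠ z := fun h => by subst h; exact sbtw_irrefl_right hxyz
  have hzx : z ≠ x := fun h => by subst h; exact sbtw_irrefl_left_right hxyz
  rcases tri_sbtw' hxu hyu.symm hxy.symm with h1 | h1
  · exact Or.inl (Or.inr ⟨h1, sbtw_cyclic_left hxyz⟩)
  · rcases tri_sbtw' hyu hzu.symm hyz.symm with h2 | h2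
    · exact Or.inr (Or.inr (Or.inl ⟨h1, sbtw_cyclic_left (hxyz.trans_left h2)⟩))
    · exact Or.inr (Or.inl (Or.inl ⟨hxyz, sbtw_cyclic_left (h1.trans_left h2)⟩))

lemma sep_of_distinct {x y z u : Y} (hxy : x ≠ y) (hxz : x ≠ z) (hxu : x ≠ u)
    (hyz : y ≠ z) (hyu : y ≠ u) (hzu : z ≠ u) :
    PairSeparates x y z u ∨ PairSeparates x z y u ∨ PairSeparates x u y z := by
  rcases tri_sbtw' hxy hyz hxz.symm with h | h
  · exact sepA' h hxu hyu hzu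
  · rcases sepA' h hxu hzu hyu with h' | h' | h'
    · exact Or.inr (Or.inl h')
    · exact Or.inl h'
    · exact Or.inr (Or.inr (Or.symm h'))

lemma infinite_of_mm {X : Type*} [CircularOrder X] [TopologicalSpace X]
    (M : MonotoneMobius X) : Infinite X := by
  obtain ⟨e⟩ := M.circle
  haveI : Infinite (AddCircle (1 : ℝ)) := by
    haveI : Fact ((0:ℝ) < 1) := ⟨one_pos⟩
    have h : (Set.Ico (0:ℝ) (0+1)).Infinite := Set.Ico_infinite (by norm_num)
    haveI h2 := h.to_subtype
    exact Infinite.of_injective (fun x : Set.Ico (0:ℝ) (0+1) => (AddCircle.equivIco 1 0).symm x)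
      (Equiv.injective _)
  exact Infinite.of_injective e.symm e.symm.toEquiv.injective

end SepLemmas

/-- Let `M` be a monotone Möbius structure on the circle. Then for every
nondegenerate 4-tuple `q = (x,y,z,u)`, `M(q) ≠ (0,0,0)`; equivalently, there is no 4-tuple of
distinct points `(x,y,z,u)` such that, in the semi-metric of `M` with infinitely remote point
`u`, `|xy|_u = |xz|_u = |yz|_u`. -/
theorem stmt5 {X : Type*} [CircularOrder X] [TopologicalSpace X]
    (M : MonotoneMobius X) (x y z u : X)
    (hxy : x ≠ y) (hxz : x ≠ z) (hxu : x ≠ u) (hyz : y ≠ z) (hyu : y ≠ u) (hzu : z ≠ u) :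
    ¬ (M.D u x y = M.D u x z ∧ M.D u x z = M.D u y z) := by
  rintro ⟨h1, h2⟩
  haveI : Infinite X := infinite_of_mm M
  obtain ⟨ω, hω⟩ := Infinite.exists_notMem_finset ({x, y, z, u} : Finset X)
  simp only [Finset.mem_insert, Finset.mem_singleton, not_or] at hω
  obtain ⟨hωx, hωy, hωz, hωu⟩ := hω
  have hx : x ≠ ω := fun h => hωx h.symm
  have hy : y ≠ ω := fun h => hωy h.symm
  have hz : z ≠ ω := fun h => hωz h.symm
  have hu : u ≠ ω := fun h => hωu h.symm
  obtain ⟨c, hc, hinv⟩ := M.inversion ω u hωu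
  have pxu : 0 < M.D ω x u := M.pos ω x u hxu hx hu
  have pyu : 0 < M.D ω y u := M.pos ω y u hyu hy hu
  have pzu : 0 < M.D ω z u := M.pos ω z u hzu hz hu
  have e1 := hinv x y hx hy hxu hyu
  have e2 := hinv x z hx hz hxu hzu
  have e3 := hinv y z hy hz hyu hzu
  rw [e1, e2] at h1
  rw [e2, e3] at h2
  have K12 : M.D ω x y * M.D ω z u = M.D ω x z * M.D ω y u := by
    field_simp at h1
    exact mul_left_cancel₀ (mul_ne_zero hc.ne' pxu.ne')
      (show (c * M.D ω x u) * (M.D ω x y * M.D ω z u)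
          = (c * M.D ω x u) * (M.D ω x z * M.D ω y u) by linear_combination (c * M.D ω x u) * h1)
  have K23 : M.D ω x z * M.D ω y u = M.D ω x u * M.D ω y z := by
    field_simp at h2
    have t := mul_left_cancel₀ (mul_ne_zero hc.ne' pzu.ne')
      (show (c * M.D ω z u) * (M.D ω x z * M.D ω y u)
          = (c * M.D ω z u) * (M.D ω x u * M.D ω y z) by linear_combination (c * M.D ω z u) * h2)
    linarith [t]
  rcases sep_of_distinct hxy hxz hxu hyz hyu hzu with hs | hs | hs
  · have := (M.mono ω x y z u hx hy hz hu hs).1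
    linarith
  · have := (M.mono ω x z y u hx hz hy hu hs).1
    linarith
  · have := (M.mono ω x u y z hx hu hy hz hs).1
    rw [M.symm ω u z] at this
    linarith
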